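/- For every lattice dimension d ≥ 3, the function p ↦ 1/E(p) is integrable on the cube (−π,π]^d ⊂ ℝ^d; in particular the integral ∫_{(−π,π]^d} dp / E(p) is finite. -/

import Mathlib

open MeasureTheory Real

/-- `|t| ^ (-2/3)` is integrable on `(-π, π]`. -/
lemma abs_rpow_neg_twoThirds_integrableOn :
    IntegrableOn (fun t : ℝ => |t| ^ (-(2 / 3) : ℝ)) (Set.Ioc (-Real.pi) Real.pi) volume := by
  have h23 : (-1 : ℝ) < -(2 / 3) := by norm_num
  have base : IntegrableOn (fun x : ℝ => x ^ (-(2 / 3) : ℝ)) (Set.Ioc 0 π) volume := by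
    have := intervalIntegral.intervalIntegrable_rpow' (a := 0) (b := π) h23
    rwa [intervalIntegrable_iff_integrableOn_Ioc_of_le Real.pi_pos.le] at this
  have hpos : IntervalIntegrable (fun t : ℝ => |t| ^ (-(2 / 3) : ℝ)) volume 0 π := by
    rw [intervalIntegrable_iff_integrableOn_Ioc_of_le Real.pi_pos.le]
    exact base.congr_fun (fun t ht => by rw [abs_of_pos ht.1]) measurableSet_Ioc
  have hneg : IntervalIntegrable (fun t : ℝ => |t| ^ (-(2 / 3) : ℝ)) volume (-π) 0 := by
    rw [IntervalIntegrable.iff_comp_neg]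
    simpa [abs_neg] using hpos.symm
  have := hneg.trans hpos
  rwa [intervalIntegrable_iff_integrableOn_Ioc_of_le
    (by linarith [Real.pi_pos] : -π ≤ π)] at this

/-- For `|t| ≤ π`, `1 - cos t ≥ (2/π²) t²`. -/
lemma one_sub_cos_ge (t : ℝ) (ht : |t| ≤ Real.pi) :
    2 / Real.pi ^ 2 * t ^ 2 ≤ 1 - Real.cos t := by
  have := Real.cos_le_one_sub_mul_cos_sq ht
  linarith

/-- For a lattice dimension `d ≥ 3`, the function `p ↦ 1 / E(p)`,
where `E(p) = ∑_{j} (1 - cos p_j)`, is integrable on the cube `(-π, π]^d`. -/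
theorem one_div_E_integrableOn (d : ℕ) (hd : 3 ≤ d) :
    IntegrableOn
      (fun p : Fin d → ℝ => 1 / (∑ j : Fin d, (1 - Real.cos (p j))))
      (Set.univ.pi fun _ : Fin d => Set.Ioc (-Real.pi) Real.pi)
      volume := by
  set i0 : Fin d := ⟨0, by omega⟩ with hi0
  set i1 : Fin d := ⟨1, by omega⟩ with hi1
  set i2 : Fin d := ⟨2, by omega⟩ with hi2
  have h01 : i0 ≠ i1 := by simp [hi0, hi1, Fin.ext_iff]
  have h02 : i0 ≠ i2 := by simp [hi0, hi2, Fin.ext_iff]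
  have h12 : i1 ≠ i2 := by simp [hi1, hi2, Fin.ext_iff]
  -- the dominating function
  set h : Fin d → ℝ → ℝ :=
    fun j t => if (j : ℕ) < 3 then 2 * |t| ^ (-(2 / 3) : ℝ) else 1 with hh
  set h' : Fin d → ℝ → ℝ := fun j => (Set.Ioc (-Real.pi) Real.pi).indicator (h j) with hh'
  set g : (Fin d → ℝ) → ℝ := fun p => ∏ j : Fin d, h' j (p j) with hg
  have cube_meas : MeasurableSet (Set.univ.pi fun _ : Fin d => Set.Ioc (-Real.pi) Real.pi) :=
    MeasurableSet.univ_pi fun _ => measurableSet_Ioc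
  rw [IntegrableOn]
  have hfm : Measurable fun p : Fin d → ℝ => 1 / (∑ j : Fin d, (1 - Real.cos (p j))) := by
    apply Measurable.div measurable_const
    exact Finset.measurable_sum _ fun j _ =>
      measurable_const.sub (Real.continuous_cos.measurable.comp (measurable_pi_apply j))
  refine Integrable.mono' (g := g) ?_ hfm.aestronglyMeasurable ?_
  · -- integrability of the dominating function
    refine Integrable.restrict (Integrable.fintype_prod fun j => ?_)
    rw [hh', integrable_indicator_iff measurableSet_Ioc]
    by_cases hj : (j : ℕ) < 3
    · simpa [hh, hj, IntegrableOn] using abs_rpow_neg_twoThirds_integrableOn.const_mul 2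
    · simp only [hh, hj, if_false]
      exact (integrableOn_const measure_Ioc_lt_top.ne)
  · -- the pointwise bound, a.e.
    have hae0 : ∀ᵐ p : Fin d → ℝ ∂volume, p i0 ≠ 0 := by
      rw [MeasureTheory.volume_pi]; exact Measure.ae_eval_ne _ i0 0
    have hae1 : ∀ᵐ p : Fin d → ℝ ∂volume, p i1 ≠ 0 := by
      rw [MeasureTheory.volume_pi]; exact Measure.ae_eval_ne _ i1 0
    have hae2 : ∀ᵐ p : Fin d → ℝ ∂volume, p i2 ≠ 0 := by
      rw [MeasureTheory.volume_pi]; exact Measure.ae_eval_ne _ i2 0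
    filter_upwards [ae_restrict_mem cube_meas, ae_restrict_of_ae hae0,
      ae_restrict_of_ae hae1, ae_restrict_of_ae hae2] with p hp hp0 hp1 hp2
    have hmem : ∀ j : Fin d, p j ∈ Set.Ioc (-Real.pi) Real.pi := fun j =>
      hp j (Set.mem_univ j)
    have habs : ∀ j : Fin d, |p j| ≤ Real.pi := fun j =>
      abs_le.2 ⟨(hmem j).1.le, (hmem j).2⟩
    set S : ℝ := ∑ j : Fin d, (1 - Real.cos (p j)) with hS
    -- each summand is nonnegative
    have hterm : ∀ j : Fin d, (0 : ℝ) ≤ 1 - Real.cos (p j) := fun j => by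
      have := Real.cos_le_one (p j); linarith
    -- abbreviations
    set A : ℝ := |p i0| ^ ((2 : ℝ) / 3) with hA
    set B : ℝ := |p i1| ^ ((2 : ℝ) / 3) with hB
    set C : ℝ := |p i2| ^ ((2 : ℝ) / 3) with hC
    have hApos : 0 < A := Real.rpow_pos_of_pos (abs_pos.2 hp0) _
    have hBpos : 0 < B := Real.rpow_pos_of_pos (abs_pos.2 hp1) _
    have hCpos : 0 < C := Real.rpow_pos_of_pos (abs_pos.2 hp2) _
    -- AM-GM for the three squares
    have hsq : ∀ j : Fin d, (p j ^ 2) ^ ((1 : ℝ) / 3) = |p j| ^ ((2 : ℝ) / 3) := by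
      intro j
      rw [← sq_abs, ← Real.rpow_natCast |p j| 2, ← Real.rpow_mul (abs_nonneg _)]
      norm_num
    have hamgm : 3 * (A * B * C) ≤ p i0 ^ 2 + p i1 ^ 2 + p i2 ^ 2 := by
      have := Real.geom_mean_le_arith_mean3_weighted
        (by norm_num : (0:ℝ) ≤ 1/3) (by norm_num : (0:ℝ) ≤ 1/3) (by norm_num : (0:ℝ) ≤ 1/3)
        (sq_nonneg (p i0)) (sq_nonneg (p i1)) (sq_nonneg (p i2)) (by norm_num)
      rw [hsq i0, hsq i1, hsq i2] at this
      rw [← hA, ← hB, ← hC] at this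
      linarith
    -- lower bound on S
    have hsum3 : (1 - Real.cos (p i0)) + (1 - Real.cos (p i1)) + (1 - Real.cos (p i2)) ≤ S := by
      have hsub : ({i0, i1, i2} : Finset (Fin d)) ⊆ Finset.univ := Finset.subset_univ _
      have := Finset.sum_le_sum_of_subset_of_nonneg hsub
        (fun j _ _ => hterm j)
      rw [Finset.sum_insert (by simp [h01, h02]), Finset.sum_insert (by simp [h12]),
        Finset.sum_singleton] at this
      rw [hS]; linarith
    have hSlb : 2 / Real.pi ^ 2 * (3 * (A * B * C)) ≤ S := by
      have e0 := one_sub_cos_ge (p i0) (habs i0)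
      have e1 := one_sub_cos_ge (p i1) (habs i1)
      have e2 := one_sub_cos_ge (p i2) (habs i2)
      have hc : 0 < 2 / Real.pi ^ 2 := by positivity
      nlinarith [hamgm, hsum3]
    have hSpos : 0 < S := lt_of_lt_of_le (by positivity) hSlb
    -- compute g p
    have hgp : g p = 8 * (A⁻¹ * B⁻¹ * C⁻¹) := by
      have hsplit : ∀ j : Fin d, j ∉ ({i0, i1, i2} : Finset (Fin d)) → h j (p j) = 1 := by
        intro j hj
        have : ¬ (j : ℕ) < 3 := by
          intro hlt
          apply hj
          simp only [Finset.mem_insert, Finset.mem_singleton]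
          have : (j : ℕ) = 0 ∨ (j : ℕ) = 1 ∨ (j : ℕ) = 2 := by omega
          rcases this with h' | h' | h'
          · exact Or.inl (Fin.ext h')
          · exact Or.inr (Or.inl (Fin.ext h'))
          · exact Or.inr (Or.inr (Fin.ext h'))
        simp [hh, this]
      have : g p = ∏ j ∈ ({i0, i1, i2} : Finset (Fin d)), h j (p j) := by
        have hind : ∀ j : Fin d, h' j (p j) = h j (p j) := fun j =>
          Set.indicator_of_mem (hmem j) (h j)
        simp only [hg, hind]
        rw [← Finset.prod_sdiff (Finset.subset_univ ({i0, i1, i2} : Finset (Fin d)))]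
        rw [Finset.prod_eq_one fun j hj => hsplit j (Finset.mem_sdiff.1 hj).2, one_mul]
      rw [this, Finset.prod_insert (by simp [h01, h02]), Finset.prod_insert (by simp [h12]),
        Finset.prod_singleton]
      have v0 : h i0 (p i0) = 2 * A⁻¹ := by
        simp only [hh, hi0, if_pos (by norm_num : (0:ℕ) < 3)]
        rw [Real.rpow_neg (abs_nonneg _)]
      have v1 : h i1 (p i1) = 2 * B⁻¹ := by
        simp only [hh, hi1, if_pos (by norm_num : (1:ℕ) < 3)]
        rw [Real.rpow_neg (abs_nonneg _)]
      have v2 : h i2 (p i2) = 2 * C⁻¹ := by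
        simp only [hh, hi2, if_pos (by norm_num : (2:ℕ) < 3)]
        rw [Real.rpow_neg (abs_nonneg _)]
      rw [v0, v1, v2]; ring
    -- conclude
    have habc : 0 < A * B * C := by positivity
    have key : 1 / S ≤ 8 * (A⁻¹ * B⁻¹ * C⁻¹) := by
      have h1 : 1 / S ≤ 1 / (2 / Real.pi ^ 2 * (3 * (A * B * C))) :=
        one_div_le_one_div_of_le (by positivity) hSlb
      have h2 : 1 / (2 / Real.pi ^ 2 * (3 * (A * B * C)))
          = Real.pi ^ 2 / 6 * (A⁻¹ * B⁻¹ * C⁻¹) := by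
        field_simp
        ring
      have hpi : Real.pi ^ 2 / 6 ≤ 8 := by
        nlinarith [Real.pi_le_four, Real.pi_pos]
      have h3 : Real.pi ^ 2 / 6 * (A⁻¹ * B⁻¹ * C⁻¹) ≤ 8 * (A⁻¹ * B⁻¹ * C⁻¹) := by
        apply mul_le_mul_of_nonneg_right hpi
        positivity
      calc 1 / S ≤ 1 / (2 / Real.pi ^ 2 * (3 * (A * B * C))) := h1
        _ = Real.pi ^ 2 / 6 * (A⁻¹ * B⁻¹ * C⁻¹) := h2
        _ ≤ 8 * (A⁻¹ * B⁻¹ * C⁻¹) := h3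
    rw [Real.norm_eq_abs, abs_of_nonneg (by positivity : (0:ℝ) ≤ 1 / S), hgp]
    exact key
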